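/- The density of the generalized Simons cone C_{1,3} ⊆ ℝ^6 is D(1,3) = 9√3·π/32, and the chain of strict inequalities D(2,2) < E(1) < D(1,3) holds, i.e. 3/2 < √(2π/e) < 9√3·π/32. (In particular, the density of C_{2,2} is strictly less than the entropy of the round circle, while the density of C_{1,3} strictly exceeds it.) -/

import Mathlib

/-- `σ_n`, the area of the unit sphere `S^n ⊆ ℝ^{n+1}`. -/
noncomputable def sphereArea (n : ℕ) : ℝ :=
  ((n : ℝ) + 1) * Real.pi ^ (((n : ℝ) + 1) / 2) / Real.Gamma (((n : ℝ) + 3) / 2)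

/-- `D(m,l)`, the density at the vertex of the generalized Simons cone `C_{m,l}`. -/
noncomputable def simonsDensity (m l : ℕ) : ℝ :=
  (sphereArea m * sphereArea l / sphereArea (m + l)) *
    ((m : ℝ) / ((m : ℝ) + (l : ℝ))) ^ ((m : ℝ) / 2) *
    ((l : ℝ) / ((m : ℝ) + (l : ℝ))) ^ ((l : ℝ) / 2)

/-- Stone's formula for the entropy of the round `n`-sphere (with `0 ^ 0 = 1`). -/
noncomputable def sphereEntropy (n : ℕ) : ℝ :=
  2 * Real.sqrt Real.pi * ((n : ℝ) / (2 * Real.exp 1)) ^ ((n : ℝ) / 2) /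
    Real.Gamma (((n : ℝ) + 1) / 2)

open Real

lemma aux_G32 : Real.Gamma (3/2) = Real.sqrt π / 2 := by
  rw [show (3/2:ℝ) = 1/2 + 1 by norm_num, Real.Gamma_add_one (by norm_num),
    Real.Gamma_one_half_eq]; ring

lemma aux_G52 : Real.Gamma (5/2) = 3 * Real.sqrt π / 4 := by
  rw [show (5/2:ℝ) = 3/2 + 1 by norm_num, Real.Gamma_add_one (by norm_num), aux_G32]; ring

lemma aux_G72 : Real.Gamma (7/2) = 15 * Real.sqrt π / 8 := by
  rw [show (7/2:ℝ) = 5/2 + 1 by norm_num, Real.Gamma_add_one (by norm_num), aux_G52]; ring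

lemma aux_G2 : Real.Gamma 2 = 1 := by
  rw [show (2:ℝ) = 1 + 1 by norm_num, Real.Gamma_add_one (by norm_num), Real.Gamma_one]; ring

lemma aux_G3 : Real.Gamma 3 = 2 := by
  rw [show (3:ℝ) = 2 + 1 by norm_num, Real.Gamma_add_one (by norm_num), aux_G2]; ring

lemma aux_rpow32 : π ^ ((3:ℝ)/2) = π * Real.sqrt π := by
  rw [show (3:ℝ)/2 = 1 + 1/2 by norm_num, Real.rpow_add Real.pi_pos, Real.rpow_one,
    ← Real.sqrt_eq_rpow]

lemma aux_rpow52 : π ^ ((5:ℝ)/2) = π ^ 2 * Real.sqrt π := by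
  rw [show (5:ℝ)/2 = 2 + 1/2 by norm_num, Real.rpow_add Real.pi_pos, ← Real.sqrt_eq_rpow,
    Real.rpow_two]

lemma aux_S1 : sphereArea 1 = 2 * π := by unfold sphereArea; norm_num [aux_G2]

lemma aux_S2 : sphereArea 2 = 4 * π := by
  unfold sphereArea
  norm_num [show ((2:ℝ)+3)/2 = 5/2 by norm_num, aux_G52, aux_rpow32]
  field_simp

lemma aux_S3 : sphereArea 3 = 2 * π ^ 2 := by
  unfold sphereArea
  norm_num [show ((3:ℝ)+3)/2 = 3 by norm_num, aux_G3, show ((3:ℝ)+1)/2 = 2 by norm_num,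
    Real.rpow_two]
  ring

lemma aux_S4 : sphereArea 4 = 8 * π ^ 2 / 3 := by
  unfold sphereArea
  norm_num [show ((4:ℝ)+3)/2 = 7/2 by norm_num, aux_G72, aux_rpow52]
  field_simp
  ring

lemma aux_D13 : simonsDensity 1 3 = 9 * Real.sqrt 3 * π / 32 := by
  have h1 : ((1:ℝ)/4) ^ ((1:ℝ)/2) = 1/2 := by
    rw [← Real.sqrt_eq_rpow, show ((1:ℝ)/4) = (1/2)^2 by norm_num,
      Real.sqrt_sq (by norm_num)]
  have h3 : ((3:ℝ)/4) ^ ((3:ℝ)/2) = 3 * Real.sqrt 3 / 8 := by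
    rw [show ((3:ℝ)/2) = (3:ℕ) * (1/2 : ℝ) by norm_num,
      Real.rpow_mul (by norm_num), Real.rpow_natCast, ← Real.sqrt_eq_rpow,
      show ((3:ℝ)/4)^(3:ℕ) = (3/8)^2 * 3 by norm_num,
      Real.sqrt_mul (by positivity), Real.sqrt_sq (by norm_num)]
    ring
  unfold simonsDensity
  norm_num [aux_S1, aux_S3, aux_S4, h1, h3]
  field_simp
  ring

lemma aux_D22 : simonsDensity 2 2 = 3/2 := by
  unfold simonsDensity
  norm_num [aux_S2, aux_S4]
  field_simp
  ring

lemma aux_E1 : sphereEntropy 1 = Real.sqrt (2 * π / Real.exp 1) := by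
  unfold sphereEntropy
  simp only [Nat.cast_one]
  rw [show ((1:ℝ)+1)/2 = 1 by norm_num, Real.Gamma_one, div_one, ← Real.sqrt_eq_rpow]
  rw [show (2:ℝ)*Real.sqrt π * Real.sqrt (1/(2*Real.exp 1))
      = Real.sqrt 4 * Real.sqrt π * Real.sqrt (1/(2*Real.exp 1)) by
      rw [show Real.sqrt 4 = 2 by rw [show (4:ℝ) = 2^2 by norm_num, Real.sqrt_sq]; norm_num],
    ← Real.sqrt_mul (by norm_num), ← Real.sqrt_mul (by positivity)]
  congr 1
  field_simp
  ring

theorem simonsDensity_one_three :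
    simonsDensity 1 3 = 9 * Real.sqrt 3 * Real.pi / 32 ∧
      simonsDensity 2 2 < sphereEntropy 1 ∧ sphereEntropy 1 < simonsDensity 1 3 := by
  refine ⟨aux_D13, ?_, ?_⟩
  · rw [aux_D22, aux_E1, Real.lt_sqrt (by norm_num), lt_div_iff₀ (Real.exp_pos 1)]
    nlinarith [Real.pi_gt_d6, Real.exp_one_lt_d9]
  · rw [aux_E1, aux_D13, Real.sqrt_lt' (by positivity), div_lt_iff₀ (Real.exp_pos 1)]
    have hsq : (9 * Real.sqrt 3 * π / 32)^2 = 243 * π^2 / 1024 := by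
      have h3 : Real.sqrt 3 ^ 2 = 3 := Real.sq_sqrt (by norm_num)
      field_simp
      nlinarith [h3, Real.pi_pos]
    rw [hsq]
    have key : (2048:ℝ) < 243 * π * Real.exp 1 := by
      nlinarith [Real.pi_gt_d6, Real.exp_one_gt_d9]
    nlinarith [mul_pos Real.pi_pos (show (0:ℝ) < 243 * π * Real.exp 1 - 2048 by linarith)]
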